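/- Let 𝓕 be a lattice of subsets of a set E. Then the union over all n ≥ 0 of the classes Bₙ(𝓕) equals the Boolean closure of 𝓕, i.e., the smallest collection of subsets of E containing 𝓕 that is closed under complementation, finite unions and finite intersections. -/

import Mathlib

/-- The alternating difference `(X₁ ∖ X₂) ∪ (X₃ ∖ X₄) ∪ ⋯` of a (decreasing,
eventually empty) chain of sets, indexed from `0` (so `X i` is `X_{i+1}`). -/
def altDiff {E : Type*} (X : ℕ → Set E) : Set E :=
  ⋃ k, X (2 * k) \ X (2 * k + 1)

/-- The `n`-th level `Bₙ(𝓕)` of the difference hierarchy over `𝓕`: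
sets of the form `X₁ - X₂ + ⋯ ± Xₙ` with `X₁ ⊇ ⋯ ⊇ Xₙ` in `𝓕` (and `X_{n+1} = ∅`). -/
def diffHier {E : Type*} (F : Set (Set E)) (n : ℕ) : Set (Set E) :=
  {S | ∃ X : ℕ → Set E, (∀ i, i < n → X i ∈ F) ∧ (∀ i, n ≤ i → X i = ∅) ∧
    (∀ i j, i ≤ j → X j ⊆ X i) ∧ S = altDiff X}

/-- The Boolean closure of `𝓕`: the smallest collection of subsets of `E`
containing `𝓕` and closed under complementation, finite unions and finite
intersections. -/
inductive BoolClosure {E : Type*} (F : Set (Set E)) : Set E → Prop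
  | base {X : Set E} : X ∈ F → BoolClosure F X
  | compl {X : Set E} : BoolClosure F X → BoolClosure F Xᶜ
  | union {X Y : Set E} : BoolClosure F X → BoolClosure F Y → BoolClosure F (X ∪ Y)
  | inter {X Y : Set E} : BoolClosure F X → BoolClosure F Y → BoolClosure F (X ∩ Y)

/-- Auxiliary parity-merging function for unions. -/
def uFun (a b : ℕ) : ℕ := if a % 2 = 1 ∧ b % 2 = 1 then a + b - 1 else a + b

lemma uFun_odd (a b : ℕ) : (uFun a b) % 2 = 1 ↔ (a % 2 = 1 ∨ b % 2 = 1) := by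
  unfold uFun; split <;> omega

lemma uFun_mono {a a' b b' : ℕ} (ha : a ≤ a') (hb : b ≤ b') : uFun a b ≤ uFun a' b' := by
  unfold uFun; split <;> split <;> omega

lemma uFun_le (a b : ℕ) : uFun a b ≤ a + b := by unfold uFun; split <;> omega

section
variable {E : Type*} {F : Set (Set E)}

/-- finite unions of members of `F` are in `F` -/
lemma finsetUnion_mem (hempty : (∅ : Set E) ∈ F)
    (hunion : ∀ X ∈ F, ∀ Y ∈ F, X ∪ Y ∈ F)
    {ι : Type*} [DecidableEq ι] (s : Finset ι) (f : ι → Set E) (hf : ∀ i ∈ s, f i ∈ F) :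
    (⋃ i ∈ s, f i) ∈ F := by
  induction s using Finset.induction_on with
  | empty => simpa using hempty
  | insert _ _ ha ih =>
      rename_i a s
      rw [Finset.set_biUnion_insert]
      exact hunion _ (hf a (Finset.mem_insert_self a s)) _
        (ih fun i hi => hf i (Finset.mem_insert_of_mem hi))

/-- rank representation -/
def goodRank (F : Set (Set E)) (S : Set E) : Prop :=
  ∃ (ρ : E → ℕ) (n : ℕ), (∀ x, ρ x ≤ n) ∧ (∀ k, {x | k < ρ x} ∈ F) ∧ S = {x | ρ x % 2 = 1}

lemma goodRank_of_diffHier (hempty : (∅ : Set E) ∈ F) {S : Set E} {n : ℕ}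
    (hS : S ∈ diffHier F n) : goodRank F S := by
  classical
  obtain ⟨X, hXF, hX0, hmono, rfl⟩ := hS
  have hex : ∀ x : E, ∃ i, x ∉ X i := fun x => ⟨n, by simp [hX0 n le_rfl]⟩
  refine ⟨fun x => Nat.find (hex x), n, ?_, ?_, ?_⟩
  · intro x
    exact Nat.find_le (by simp [hX0 n le_rfl])
  · intro k
    have : {x | k < Nat.find (hex x)} = X k := by
      ext x
      simp only [Set.mem_setOf_eq]
      constructor
      · intro hk
        have := Nat.find_min (hex x) hk
        exact not_not.mp this
      · intro hx
        by_contra h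
        push_neg at h
        exact (Nat.find_spec (hex x)) (hmono _ _ h hx)
    rw [this]
    rcases lt_or_ge k n with h | h
    · exact hXF k h
    · rw [hX0 k h]; exact hempty
  · have hmem : ∀ x i, x ∈ X i ↔ i < Nat.find (hex x) := by
      intro x i
      constructor
      · intro hx
        by_contra h
        push_neg at h
        exact (Nat.find_spec (hex x)) (hmono _ _ h hx)
      · intro hk
        exact not_not.mp (Nat.find_min (hex x) hk)
    ext x
    simp only [altDiff, Set.mem_iUnion, Set.mem_diff, Set.mem_setOf_eq]
    constructor
    · rintro ⟨k, h1, h2⟩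
      have h1' := (hmem x _).mp h1
      have h2' : ¬ (2 * k + 1 < Nat.find (hex x)) := fun h => h2 ((hmem x _).mpr h)
      omega
    · intro h
      refine ⟨Nat.find (hex x) / 2, (hmem x _).mpr (by omega), fun hc => ?_⟩
      have := (hmem x _).mp hc
      omega

lemma diffHier_of_goodRank {S : Set E} (hS : goodRank F S) :
    ∃ n, S ∈ diffHier F n := by
  obtain ⟨ρ, n, hle, hlev, rfl⟩ := hS
  refine ⟨n, fun k => {x | k < ρ x}, fun i _ => hlev i, ?_, ?_, ?_⟩
  · intro i hi
    ext x; simp only [Set.mem_setOf_eq, Set.mem_empty_iff_false, iff_false, not_lt]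
    exact (hle x).trans hi
  · intro i j hij x hx
    simp only [Set.mem_setOf_eq] at *
    omega
  · ext x
    simp only [altDiff, Set.mem_iUnion, Set.mem_diff, Set.mem_setOf_eq]
    constructor
    · intro h; exact ⟨ρ x / 2, by omega, by omega⟩
    · rintro ⟨k, h1, h2⟩; omega

lemma goodRank_base (hempty : (∅ : Set E) ∈ F) {S : Set E} (hS : S ∈ F) :
    goodRank F S := by
  classical
  refine ⟨fun x => if x ∈ S then 1 else 0, 1, fun x => by dsimp only; split <;> omega, ?_, ?_⟩
  · intro k
    rcases Nat.eq_zero_or_pos k with rfl | hk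
    · have : {x | 0 < if x ∈ S then 1 else 0} = S := by
        ext x; simp only [Set.mem_setOf_eq]; split <;> simp_all
      rwa [this]
    · have : {x | k < if x ∈ S then 1 else 0} = ∅ := by
        ext x; simp only [Set.mem_setOf_eq, Set.mem_empty_iff_false, iff_false]; split <;> omega
      rw [this]; exact hempty
  · ext x; simp only [Set.mem_setOf_eq]; split <;> simp_all

lemma goodRank_compl (huniv : (Set.univ : Set E) ∈ F) {S : Set E} (hS : goodRank F S) :
    goodRank F Sᶜ := by
  obtain ⟨ρ, n, hle, hlev, rfl⟩ := hS
  refine ⟨fun x => ρ x + 1, n + 1, fun x => by dsimp only; have := hle x; omega, ?_, ?_⟩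
  · intro k
    rcases Nat.eq_zero_or_pos k with rfl | hk
    · have : {x | 0 < ρ x + 1} = Set.univ := by ext x; simp
      rwa [this]
    · obtain ⟨j, rfl⟩ := Nat.exists_eq_add_of_le hk
      have : {x | 1 + j < ρ x + 1} = {x | j < ρ x} := by ext x; simp only [Set.mem_setOf_eq]; omega
      rw [this]; exact hlev j
  · ext x; simp only [Set.mem_compl_iff, Set.mem_setOf_eq]; omega

lemma levelSet_ge_mem (huniv : (Set.univ : Set E) ∈ F) {ρ : E → ℕ}
    (hlev : ∀ k, {x | k < ρ x} ∈ F) (a : ℕ) : {x | a ≤ ρ x} ∈ F := by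
  rcases Nat.eq_zero_or_pos a with rfl | ha
  · have : {x : E | 0 ≤ ρ x} = Set.univ := by ext x; simp
    rwa [this]
  · obtain ⟨j, rfl⟩ := Nat.exists_eq_add_of_le ha
    have : {x | 1 + j ≤ ρ x} = {x | j < ρ x} := by ext x; simp only [Set.mem_setOf_eq]; omega
    rw [this]; exact hlev j

lemma goodRank_union (hempty : (∅ : Set E) ∈ F) (huniv : (Set.univ : Set E) ∈ F)
    (hunion : ∀ X ∈ F, ∀ Y ∈ F, X ∪ Y ∈ F) (hinter : ∀ X ∈ F, ∀ Y ∈ F, X ∩ Y ∈ F)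
    {S T : Set E} (hS : goodRank F S) (hT : goodRank F T) : goodRank F (S ∪ T) := by
  classical
  obtain ⟨ρ, m, hρle, hρlev, rfl⟩ := hS
  obtain ⟨σ, n, hσle, hσlev, rfl⟩ := hT
  refine ⟨fun x => uFun (ρ x) (σ x), m + n, fun x => (uFun_le _ _).trans (by
      have := hρle x; have := hσle x; omega), ?_, ?_⟩
  · intro k
    have key : {x | k < uFun (ρ x) (σ x)} =
        ⋃ p ∈ (Finset.range (m + 1) ×ˢ Finset.range (n + 1)).filter
          (fun p : ℕ × ℕ => k < uFun p.1 p.2),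
          ({x | p.1 ≤ ρ x} ∩ {x | p.2 ≤ σ x}) := by
      ext x
      simp only [Set.mem_setOf_eq, Set.mem_iUnion, Finset.mem_filter, Finset.mem_product,
        Finset.mem_range, Set.mem_inter_iff, exists_prop]
      constructor
      · intro h
        exact ⟨(ρ x, σ x), ⟨⟨Nat.lt_succ_of_le (hρle x), Nat.lt_succ_of_le (hσle x)⟩, h⟩,
          le_rfl, le_rfl⟩
      · rintro ⟨p, ⟨-, hp⟩, h1, h2⟩
        exact hp.trans_le (uFun_mono h1 h2)
    rw [key]
    refine finsetUnion_mem hempty hunion _ _ ?_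
    intro p _
    exact hinter _ (levelSet_ge_mem huniv hρlev p.1) _ (levelSet_ge_mem huniv hσlev p.2)
  · ext x
    simp only [Set.mem_union, Set.mem_setOf_eq, uFun_odd]

end

/-- **Hausdorff's theorem.** If `𝓕` is a lattice of subsets of `E`, the union of
the classes `Bₙ(𝓕)` is the Boolean closure of `𝓕`. -/
theorem unionDiffHier_eq_boolClosure {E : Type*} (F : Set (Set E))
    (hempty : (∅ : Set E) ∈ F) (huniv : (Set.univ : Set E) ∈ F)
    (hunion : ∀ X ∈ F, ∀ Y ∈ F, X ∪ Y ∈ F)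
    (hinter : ∀ X ∈ F, ∀ Y ∈ F, X ∩ Y ∈ F) :
    (⋃ n, diffHier F n) = {S | BoolClosure F S} := by
  classical
  have bool_biUnion : ∀ (s : Finset ℕ) (g : ℕ → Set E),
      (∀ k ∈ s, BoolClosure F (g k)) → BoolClosure F (⋃ k ∈ s, g k) := by
    intro s g hg
    induction s using Finset.induction_on with
    | empty => simpa using BoolClosure.base hempty
    | insert _ _ ha ih =>
        rename_i a s
        rw [Finset.set_biUnion_insert]
        exact BoolClosure.union (hg a (Finset.mem_insert_self a s))
          (ih fun k hk => hg k (Finset.mem_insert_of_mem hk))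
  apply Set.eq_of_subset_of_subset
  · intro S hS
    rw [Set.mem_iUnion] at hS
    obtain ⟨n, X, hXF, hX0, hmono, rfl⟩ := hS
    have hXmem : ∀ i, X i ∈ F := by
      intro i
      rcases lt_or_ge i n with h | h
      · exact hXF i h
      · rw [hX0 i h]; exact hempty
    have key : altDiff X = ⋃ k ∈ Finset.range n, (X (2 * k) ∩ (X (2 * k + 1))ᶜ) := by
      ext x
      simp only [altDiff, Set.mem_iUnion, Set.mem_diff, Finset.mem_range,
        Set.mem_inter_iff, Set.mem_compl_iff, exists_prop]
      constructor
      · rintro ⟨k, h1, h2⟩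
        refine ⟨k, ?_, h1, h2⟩
        by_contra h
        push_neg at h
        rw [hX0 (2 * k) (by omega)] at h1
        exact h1
      · rintro ⟨k, -, h1, h2⟩; exact ⟨k, h1, h2⟩
    rw [key]
    exact bool_biUnion _ _ fun k _ =>
      BoolClosure.inter (BoolClosure.base (hXmem (2 * k)))
        (BoolClosure.compl (BoolClosure.base (hXmem (2 * k + 1))))
  · intro S hS
    simp only [Set.mem_setOf_eq] at hS
    have : goodRank F S := by
      induction hS with
      | base h => exact goodRank_base hempty h
      | compl _ ih => exact goodRank_compl huniv ih
      | union _ _ ih1 ih2 => exact goodRank_union hempty huniv hunion hinter ih1 ih2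
      | inter _ _ ih1 ih2 =>
          rename_i A B _ _
          have : A ∩ B = (Aᶜ ∪ Bᶜ)ᶜ := by rw [Set.compl_union, compl_compl, compl_compl]
          rw [this]
          exact goodRank_compl huniv
            (goodRank_union hempty huniv hunion hinter
              (goodRank_compl huniv ih1) (goodRank_compl huniv ih2))
    obtain ⟨n, hn⟩ := diffHier_of_goodRank this
    exact Set.mem_iUnion.mpr ⟨n, hn⟩
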